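/- Let i ≥ 1 and k ∈ ℕ be integers, let ρ ∈ (0,1), let b ≥ 0 and c > 0 be reals, let ρ < r < 1 and a > ρ, and define F₂(p) = (p−ρ)^{−i} p^{−k} exp(b/p) for complex p ∉ {0, ρ}. Then (1/(2πi)) ∮_{|p|=r} F₂(p) e^{c p} dp = (1/(2π)) ∫_{−∞}^{∞} F₂(a + i t) e^{c(a + i t)} dt, where the contour integral is taken counterclockwise over the circle of radius r centered at the origin and the line integral (the Bromwich integral along Re p = a) converges. -/

import Mathlib

open MeasureTheory Real Finset Filter intervalIntegral


lemma abs_sub_le_of_uIcc {t a b : ℝ} (ht : t ∈ Set.uIcc a b) : |t - a| ≤ |b - a| := by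
  rcases le_total a b with h | h
  · rw [Set.uIcc_of_le h, Set.mem_Icc] at ht
    rw [_root_.abs_of_nonneg (by linarith), _root_.abs_of_nonneg (by linarith)]; linarith
  · rw [Set.uIcc_of_ge h, Set.mem_Icc] at ht
    rw [_root_.abs_of_nonpos (by linarith), _root_.abs_of_nonpos (by linarith)]; linarith

lemma re_mem_uIcc_gt {σ x₁ x₂ t : ℝ} (h1 : σ < x₁) (h2 : σ < x₂) (ht : t ∈ Set.uIcc x₁ x₂) :
    σ < t := by
  rcases le_total x₁ x₂ with h | h
  · rw [Set.uIcc_of_le h, Set.mem_Icc] at ht; linarith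
  · rw [Set.uIcc_of_ge h, Set.mem_Icc] at ht; linarith

lemma halfplane_primitive {σ : ℝ} {g : ℂ → ℂ}
    (hg : ∀ z : ℂ, σ < z.re → DifferentiableAt ℂ g z) :
    ∃ G : ℂ → ℂ, ∀ z : ℂ, σ < z.re → HasDerivAt G (g z) z := by
  have hcont : ∀ z : ℂ, σ < z.re → ContinuousAt g z := fun z hz => (hg z hz).continuousAt
  -- horizontal integrability
  have hIH : ∀ x₁ x₂ y : ℝ, σ < x₁ → σ < x₂ →
      IntervalIntegrable (fun t : ℝ => g ((t : ℂ) + (y : ℂ) * Complex.I)) volume x₁ x₂ := by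
    intro x₁ x₂ y h1 h2
    apply ContinuousOn.intervalIntegrable
    intro t ht
    apply ContinuousAt.continuousWithinAt
    apply ContinuousAt.comp (x := t) (g := g)
    · apply hcont; simpa using re_mem_uIcc_gt h1 h2 ht
    · fun_prop
  -- vertical integrability
  have hIV : ∀ x y₁ y₂ : ℝ, σ < x →
      IntervalIntegrable (fun s : ℝ => g ((x : ℂ) + (s : ℂ) * Complex.I)) volume y₁ y₂ := by
    intro x y₁ y₂ hx
    apply ContinuousOn.intervalIntegrable
    intro s _
    apply ContinuousAt.continuousWithinAt
    apply ContinuousAt.comp (x := s) (g := g)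
    · apply hcont; simpa using hx
    · fun_prop
  -- rectangle identity
  have hrect : ∀ x₁ x₂ y₁ y₂ : ℝ, σ < x₁ → σ < x₂ →
      (∫ t in x₁..x₂, g ((t : ℂ) + (y₁ : ℂ) * Complex.I)) -
        (∫ t in x₁..x₂, g ((t : ℂ) + (y₂ : ℂ) * Complex.I)) +
        Complex.I • (∫ s in y₁..y₂, g ((x₂ : ℂ) + (s : ℂ) * Complex.I)) -
        Complex.I • (∫ s in y₁..y₂, g ((x₁ : ℂ) + (s : ℂ) * Complex.I)) = 0 := by
    intro x₁ x₂ y₁ y₂ h1 h2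
    have := Complex.integral_boundary_rect_eq_zero_of_differentiableOn g
      ((x₁ : ℂ) + (y₁ : ℂ) * Complex.I) ((x₂ : ℂ) + (y₂ : ℂ) * Complex.I) ?_
    · simpa using this
    · intro w hw
      rw [Complex.mem_reProdIm] at hw
      have hw1 : w.re ∈ Set.uIcc x₁ x₂ := by simpa using hw.1
      exact (hg w (re_mem_uIcc_gt h1 h2 hw1)).differentiableWithinAt
  -- the primitive
  refine ⟨fun z => (∫ t in (σ+1)..z.re, g ((t:ℂ) + ((0:ℝ):ℂ) * Complex.I)) +
      Complex.I * ∫ s in (0:ℝ)..z.im, g ((z.re : ℂ) + (s:ℂ) * Complex.I), fun z hz => ?_⟩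
  rw [hasDerivAt_iff_isLittleO, Asymptotics.isLittleO_iff]
  intro ε hε
  obtain ⟨δ, hδpos, hδ⟩ := Metric.continuousAt_iff.1 (hcont z hz) (ε/2) (by linarith)
  have hδ' : ∀ w : ℂ, dist w z < δ → ‖g w - g z‖ ≤ ε/2 := by
    intro w hw; exact le_of_lt (by simpa [dist_eq_norm] using hδ hw)
  set δ₀ : ℝ := min (δ/3) ((z.re - σ)/2) with hδ₀def
  have hδ₀pos : 0 < δ₀ := lt_min (by linarith) (by linarith)
  filter_upwards [Metric.ball_mem_nhds z hδ₀pos] with w hw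
  obtain ⟨h, rfl⟩ : ∃ h, w = z + h := ⟨w - z, by ring⟩
  have hh : ‖h‖ < δ₀ := by simpa [dist_eq_norm] using hw
  set x := z.re; set y := z.im
  set h₁ := h.re; set h₂ := h.im
  have habs1 : |h₁| ≤ ‖h‖ := Complex.abs_re_le_norm h
  have habs2 : |h₂| ≤ ‖h‖ := Complex.abs_im_le_norm h
  have hδ₀le1 : δ₀ ≤ δ/3 := min_le_left _ _
  have hδ₀le2 : δ₀ ≤ (x - σ)/2 := min_le_right _ _
  have hx : σ < x := hz
  have hxh : σ < x + h₁ := by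
    have := abs_le.1 habs1
    have : -(‖h‖) ≤ h₁ := by linarith [this.1]
    linarith [hh.trans_le hδ₀le2]
  have hre : (z+h).re = x + h₁ := by simp [x, h₁]
  have him : (z+h).im = y + h₂ := by simp [y, h₂]
  -- decompose G(z+h) - G(z)
  have step1 : (∫ t in (σ+1)..(x+h₁), g ((t:ℂ) + ((0:ℝ):ℂ) * Complex.I)) -
      (∫ t in (σ+1)..x, g ((t:ℂ) + ((0:ℝ):ℂ) * Complex.I)) =
      ∫ t in x..(x+h₁), g ((t:ℂ) + ((0:ℝ):ℂ) * Complex.I) := by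
    rw [eq_comm, eq_sub_iff_add_eq, add_comm]
    exact intervalIntegral.integral_add_adjacent_intervals
      (hIH _ _ _ (by linarith) hx) (hIH _ _ _ hx hxh)
  have step2 : (∫ s in (0:ℝ)..(y+h₂), g (((x+h₁:ℝ):ℂ) + (s:ℂ) * Complex.I)) =
      (∫ s in (0:ℝ)..y, g (((x+h₁:ℝ):ℂ) + (s:ℂ) * Complex.I)) +
      ∫ s in y..(y+h₂), g (((x+h₁:ℝ):ℂ) + (s:ℂ) * Complex.I) :=
    (intervalIntegral.integral_add_adjacent_intervals (hIV _ _ _ hxh) (hIV _ _ _ hxh)).symm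
  have step3 := hrect x (x+h₁) 0 y hx hxh
  simp only [smul_eq_mul] at step3
  have hrei : ((h₁:ℂ)) + (h₂:ℂ) * Complex.I = h := Complex.re_add_im h
  -- key decomposition
  have key : (((∫ t in (σ+1)..(z+h).re, g ((t:ℂ) + ((0:ℝ):ℂ) * Complex.I)) +
        Complex.I * ∫ s in (0:ℝ)..(z+h).im, g (((z+h).re : ℂ) + (s:ℂ) * Complex.I)) -
      ((∫ t in (σ+1)..x, g ((t:ℂ) + ((0:ℝ):ℂ) * Complex.I)) +
        Complex.I * ∫ s in (0:ℝ)..y, g ((x : ℂ) + (s:ℂ) * Complex.I))) =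
      (∫ t in x..(x+h₁), g ((t:ℂ) + (y:ℂ) * Complex.I)) +
        Complex.I * ∫ s in y..(y+h₂), g (((x+h₁:ℝ):ℂ) + (s:ℂ) * Complex.I) := by
    rw [hre, him]
    linear_combination step1 + step3 + Complex.I * step2
  have hI1 : IntervalIntegrable (fun t : ℝ => g ((t:ℂ) + (y:ℂ) * Complex.I)) volume x (x+h₁) :=
    hIH _ _ _ hx hxh
  have hI2 : IntervalIntegrable (fun s : ℝ => g (((x+h₁:ℝ):ℂ) + (s:ℂ) * Complex.I)) volume y (y+h₂) :=
    hIV _ _ _ hxh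
  have hsub1 : (∫ t in x..(x+h₁), g ((t:ℂ) + (y:ℂ) * Complex.I)) - (h₁:ℂ) * g z =
      ∫ t in x..(x+h₁), (g ((t:ℂ) + (y:ℂ) * Complex.I) - g z) := by
    rw [intervalIntegral.integral_sub hI1 intervalIntegrable_const,
      intervalIntegral.integral_const]
    simp [Complex.real_smul]
  have hsub2 : (∫ s in y..(y+h₂), g (((x+h₁:ℝ):ℂ) + (s:ℂ) * Complex.I)) - (h₂:ℂ) * g z =
      ∫ s in y..(y+h₂), (g (((x+h₁:ℝ):ℂ) + (s:ℂ) * Complex.I) - g z) := by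
    rw [intervalIntegral.integral_sub hI2 intervalIntegrable_const,
      intervalIntegral.integral_const]
    simp [Complex.real_smul]
  have hbnd1 : ‖∫ t in x..(x+h₁), (g ((t:ℂ) + (y:ℂ) * Complex.I) - g z)‖ ≤ (ε/2) * |h₁| := by
    have := intervalIntegral.norm_integral_le_of_norm_le_const (C := ε/2)
      (f := fun t : ℝ => g ((t:ℂ) + (y:ℂ) * Complex.I) - g z) (a := x) (b := x+h₁) ?_
    · simpa using this
    · intro t ht
      apply hδ'
      have ht' : t ∈ Set.uIcc x (x+h₁) := Set.uIoc_subset_uIcc ht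
      have hd : ((t:ℂ) + (y:ℂ) * Complex.I) - z = ((t - x : ℝ) : ℂ) := by
        apply Complex.ext <;> simp [x, y]
      rw [dist_eq_norm, hd]
      have : |t - x| ≤ |h₁| := by
        have := abs_sub_le_of_uIcc ht'
        simpa using this
      have h3 : |h₁| < δ/3 := lt_of_le_of_lt habs1 (hh.trans_le hδ₀le1)
      simp only [Complex.norm_real, Real.norm_eq_abs]
      linarith
  have hbnd2 : ‖∫ s in y..(y+h₂), (g (((x+h₁:ℝ):ℂ) + (s:ℂ) * Complex.I) - g z)‖ ≤ (ε/2) * |h₂| := by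
    have := intervalIntegral.norm_integral_le_of_norm_le_const (C := ε/2)
      (f := fun s : ℝ => g (((x+h₁:ℝ):ℂ) + (s:ℂ) * Complex.I) - g z) (a := y) (b := y+h₂) ?_
    · simpa using this
    · intro s hs
      apply hδ'
      have hs' : s ∈ Set.uIcc y (y+h₂) := Set.uIoc_subset_uIcc hs
      have hd : (((x+h₁:ℝ):ℂ) + (s:ℂ) * Complex.I) - z = ((h₁ : ℝ) : ℂ) + ((s - y : ℝ):ℂ) * Complex.I := by
        apply Complex.ext <;> simp [x, y]
      rw [dist_eq_norm, hd]
      have h5 : |s - y| ≤ |h₂| := by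
        have := abs_sub_le_of_uIcc hs'
        simpa using this
      have h3 : |h₁| < δ/3 := lt_of_le_of_lt habs1 (hh.trans_le hδ₀le1)
      have h4 : |h₂| < δ/3 := lt_of_le_of_lt habs2 (hh.trans_le hδ₀le1)
      calc ‖((h₁ : ℝ) : ℂ) + ((s - y : ℝ):ℂ) * Complex.I‖
          ≤ ‖((h₁ : ℝ) : ℂ)‖ + ‖((s - y : ℝ):ℂ) * Complex.I‖ := norm_add_le _ _
        _ = |h₁| + |s - y| := by
            simp [← Complex.ofReal_sub]
        _ < δ := by linarith
  -- final assembly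
  have hfin : (((∫ t in (σ+1)..(z+h).re, g ((t:ℂ) + ((0:ℝ):ℂ) * Complex.I)) +
        Complex.I * ∫ s in (0:ℝ)..(z+h).im, g (((z+h).re : ℂ) + (s:ℂ) * Complex.I)) -
      ((∫ t in (σ+1)..x, g ((t:ℂ) + ((0:ℝ):ℂ) * Complex.I)) +
        Complex.I * ∫ s in (0:ℝ)..y, g ((x : ℂ) + (s:ℂ) * Complex.I))) - (z + h - z) • g z =
      (∫ t in x..(x+h₁), (g ((t:ℂ) + (y:ℂ) * Complex.I) - g z)) +
        Complex.I * ∫ s in y..(y+h₂), (g (((x+h₁:ℝ):ℂ) + (s:ℂ) * Complex.I) - g z) := by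
    rw [key, ← hsub1, ← hsub2, smul_eq_mul]
    linear_combination (g z) * hrei
  calc ‖(((∫ t in (σ+1)..(z+h).re, g ((t:ℂ) + ((0:ℝ):ℂ) * Complex.I)) +
        Complex.I * ∫ s in (0:ℝ)..(z+h).im, g (((z+h).re : ℂ) + (s:ℂ) * Complex.I)) -
      ((∫ t in (σ+1)..x, g ((t:ℂ) + ((0:ℝ):ℂ) * Complex.I)) +
        Complex.I * ∫ s in (0:ℝ)..y, g ((x : ℂ) + (s:ℂ) * Complex.I))) - (z + h - z) • g z‖
      = ‖(∫ t in x..(x+h₁), (g ((t:ℂ) + (y:ℂ) * Complex.I) - g z)) +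
        Complex.I * ∫ s in y..(y+h₂), (g (((x+h₁:ℝ):ℂ) + (s:ℂ) * Complex.I) - g z)‖ := by
        rw [hfin]
    _ ≤ ‖∫ t in x..(x+h₁), (g ((t:ℂ) + (y:ℂ) * Complex.I) - g z)‖ +
        ‖Complex.I * ∫ s in y..(y+h₂), (g (((x+h₁:ℝ):ℂ) + (s:ℂ) * Complex.I) - g z)‖ :=
        norm_add_le _ _
    _ ≤ (ε/2) * |h₁| + (ε/2) * |h₂| := by
        rw [norm_mul, Complex.norm_I, one_mul]
        exact add_le_add hbnd1 hbnd2
    _ ≤ ε * ‖h‖ := by nlinarith [abs_nonneg h₁, abs_nonneg h₂, norm_nonneg h]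
    _ = ε * ‖z + h - z‖ := by ring_nf


lemma tail_bound {D cR θ₀ A : ℝ} {P : ℝ → ℂ} (hD : 0 ≤ D) (hcR : 0 < cR)
    (hP : Continuous P) (hbnd : ∀ u, ‖P u‖ ≤ D * Real.exp (cR * Real.cos u))
    (hθ₀ : 0 ≤ θ₀) (hθπ : θ₀ ≤ π / 2) (hA : Real.cos θ₀ = A) :
    ‖∫ u in θ₀..π, P u‖ ≤ D * Real.exp (cR * A) * (π / 2 - θ₀) + D * (π / (2 * cR)) := by
  have hπ : (0:ℝ) < π := Real.pi_pos
  have hsplit : (∫ u in θ₀..π, P u) = (∫ u in θ₀..(π/2), P u) + ∫ u in (π/2)..π, P u :=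
    (integral_add_adjacent_intervals (hP.intervalIntegrable _ _)
      (hP.intervalIntegrable _ _)).symm
  rw [hsplit]
  refine (norm_add_le _ _).trans (add_le_add ?_ ?_)
  · -- near-vertical piece
    have h1 : ‖∫ u in θ₀..(π/2), P u‖ ≤ (D * Real.exp (cR * A)) * |π/2 - θ₀| := by
      apply intervalIntegral.norm_integral_le_of_norm_le_const
      intro u hu
      rw [Set.uIoc_of_le hθπ] at hu
      have hcu : Real.cos u ≤ Real.cos θ₀ :=
        Real.cos_le_cos_of_nonneg_of_le_pi hθ₀ (by linarith [hu.2]) hu.1.le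
      calc ‖P u‖ ≤ D * Real.exp (cR * Real.cos u) := hbnd u
        _ ≤ D * Real.exp (cR * A) := by
            apply mul_le_mul_of_nonneg_left _ hD
            apply Real.exp_le_exp.2
            rw [← hA]
            exact mul_le_mul_of_nonneg_left hcu hcR.le
    rwa [abs_of_nonneg (by linarith)] at h1
  · -- Jordan piece
    set gb : ℝ → ℝ := fun u => D * Real.exp (cR * (1 - 2*u/π)) with hgbdef
    have hgbc : Continuous gb := by fun_prop
    have h2 : ‖∫ u in (π/2)..π, P u‖ ≤ |∫ u in (π/2)..π, gb u| := by
      apply intervalIntegral.norm_integral_le_abs_of_norm_le _ (hgbc.intervalIntegrable _ _)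
      rw [ae_restrict_iff' measurableSet_uIoc]
      apply Filter.Eventually.of_forall
      intro u hu
      rw [Set.uIoc_of_le (by linarith)] at hu
      have hsin : 2/π * (u - π/2) ≤ Real.sin (u - π/2) :=
        Real.mul_le_sin (by linarith [hu.1]) (by linarith [hu.2])
      have hcosu : Real.cos u ≤ 1 - 2*u/π := by
        have hc : Real.cos u = -Real.sin (u - π/2) := by
          rw [← Real.sin_pi_div_two_sub]
          rw [show π/2 - u = -(u - π/2) by ring, Real.sin_neg]
        rw [hc]
        have h4 : 2/π * (u - π/2) = 2*u/π - 1 := by field_simp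
        linarith [hsin]
      calc ‖P u‖ ≤ D * Real.exp (cR * Real.cos u) := hbnd u
        _ ≤ gb u := by
            apply mul_le_mul_of_nonneg_left _ hD
            exact Real.exp_le_exp.2 (mul_le_mul_of_nonneg_left hcosu hcR.le)
    have hcalc : (∫ u in (π/2)..π, gb u) = D * (π/(2*cR)) * (1 - Real.exp (-cR)) := by
      have hftc : ∀ u ∈ Set.uIcc (π/2) π,
          HasDerivAt (fun v => -(D * π/(2*cR)) * Real.exp (cR * (1 - 2*v/π)))
            (gb u) u := by
        intro u _
        have h1 : HasDerivAt (fun v : ℝ => cR * (1 - 2*v/π)) (cR * (-(2/π))) u := by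
          have h0 : HasDerivAt (fun v : ℝ => 1 - 2/π * v) (-(2/π)) u := by
            simpa using ((hasDerivAt_id u).const_mul (2/π)).const_sub (1:ℝ)
          have h0' := h0.const_mul cR
          rw [show (fun v : ℝ => cR * (1 - 2*v/π)) = fun v => cR * (1 - 2/π*v) by funext v; ring]; exact h0'
        have h2' := (h1.exp).const_mul (-(D * π/(2*cR)))
        refine h2'.congr_deriv ?_
        rw [hgbdef]
        field_simp
      rw [intervalIntegral.integral_eq_sub_of_hasDerivAt hftc
        ((by fun_prop : Continuous gb).intervalIntegrable _ _)]
      have e1 : cR * (1 - 2*π/π) = -cR := by field_simp; ring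
      have e2 : cR * (1 - 2*(π/2)/π) = 0 := by field_simp; ring
      rw [e1, e2, Real.exp_zero]
      field_simp
      ring
    have hexp : Real.exp (-cR) ≤ 1 := Real.exp_le_one_iff.2 (by linarith)
    have hexp0 : 0 ≤ Real.exp (-cR) := (Real.exp_pos _).le
    have hpos : 0 ≤ D * (π/(2*cR)) := by positivity
    calc ‖∫ u in (π/2)..π, P u‖ ≤ |∫ u in (π/2)..π, gb u| := h2
      _ = D * (π/(2*cR)) * (1 - Real.exp (-cR)) := by
          rw [hcalc, abs_of_nonneg (by nlinarith)]
      _ ≤ D * (π/(2*cR)) := by nlinarith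

/-- The function `F₂(p) = (p-ρ)^{-i} p^{-k} exp(b/p)`. -/
noncomputable def F2 (i k : ℕ) (ρ : ℝ) (b : ℝ) (p : ℂ) : ℂ :=
  (p - (ρ : ℂ)) ^ (-(i : ℤ)) * p ^ (-(k : ℤ)) * Complex.exp ((b : ℂ) / p)

set_option maxHeartbeats 1000000 in
theorem contour_eq_bromwich (i k : ℕ) (hi : 1 ≤ i) (ρ : ℝ) (hρ : ρ ∈ Set.Ioo (0 : ℝ) 1)
    (b c : ℝ) (hb : 0 ≤ b) (hc : 0 < c)
    (r a : ℝ) (hr₀ : ρ < r) (hr₁ : r < 1) (ha : ρ < a) :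
    Tendsto
      (fun T : ℝ => (1 / (2 * (Real.pi : ℂ))) *
        ∫ t in (-T)..T, F2 i k ρ b ((a : ℂ) + t * Complex.I) *
          Complex.exp ((c : ℂ) * ((a : ℂ) + t * Complex.I)))
      atTop
      (nhds ((2 * Real.pi * Complex.I)⁻¹ *
          ∮ p in C(0, r), F2 i k ρ b p * Complex.exp ((c : ℂ) * p))) := by
  obtain ⟨hρ0, hρ1⟩ := hρ
  have ha0 : 0 < a := hρ0.trans ha
  set g : ℂ → ℂ := fun p => F2 i k ρ b p * Complex.exp ((c : ℂ) * p) with hgdef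
  -- differentiability away from 0 and ρ
  have hdiff : ∀ z : ℂ, z ≠ 0 → z ≠ (ρ : ℂ) → DifferentiableAt ℂ g z := by
    intro z h0 hρz
    apply DifferentiableAt.mul
    · apply DifferentiableAt.mul
      · apply DifferentiableAt.mul
        · exact (differentiableAt_id.sub_const _).zpow (Or.inl (sub_ne_zero.2 hρz))
        · exact differentiableAt_id.zpow (Or.inl h0)
      · exact ((differentiableAt_const _).div differentiableAt_id h0).cexp
    · exact (differentiableAt_id.const_mul _).cexp
  set σ : ℝ := (ρ + a) / 2 with hσdef
  have hσρ : ρ < σ := by simp [hσdef]; linarith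
  have hσa : σ < a := by simp [hσdef]; linarith
  have hσ0 : 0 < σ := hρ0.trans hσρ
  obtain ⟨G, hG⟩ := halfplane_primitive (g := g) (σ := σ) (fun z hz => hdiff z
    (fun h => by simp [h] at hz; linarith) (fun h => by simp [h] at hz; linarith))
  -- radius and angle
  set R : ℝ → ℝ := fun T => Real.sqrt (a ^ 2 + T ^ 2) with hRdef
  set θ : ℝ → ℝ := fun T => Real.arccos (a / R T) with hθdef
  set E₁ : ℝ → ℂ := fun T => ∫ u in (θ T)..π,
      deriv (circleMap 0 (R T)) u • g (circleMap 0 (R T) u) with hE₁def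
  set E₂ : ℝ → ℂ := fun T => ∫ u in (-π)..(-(θ T)),
      deriv (circleMap 0 (R T)) u • g (circleMap 0 (R T) u) with hE₂def
  have hne : ∀ z : ℂ, σ < z.re → z ≠ 0 ∧ z ≠ (ρ : ℂ) := by
    intro z hz
    constructor
    · intro h; rw [h] at hz; simp at hz; linarith
    · intro h; rw [h] at hz; simp at hz; linarith
  have hgc : ∀ z : ℂ, z ≠ 0 → z ≠ (ρ : ℂ) → ContinuousAt g z :=
    fun z h0 h1 => (hdiff z h0 h1).continuousAt
  have hπ : (0:ℝ) < π := Real.pi_pos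
  have hEq : ∀ᶠ T in atTop, (1 / (2 * (Real.pi : ℂ))) *
        (∫ t in (-T)..T, g ((a : ℂ) + (t : ℂ) * Complex.I)) =
      (2 * Real.pi * Complex.I)⁻¹ * (∮ p in C(0, r), g p) -
      (2 * Real.pi * Complex.I)⁻¹ * (E₁ T + E₂ T) := by
    filter_upwards [eventually_ge_atTop (max (max 1 (r+1)) (2*ρ+2))] with T hT
    have hT1 : (1:ℝ) ≤ T := le_trans (le_max_left _ _) (le_trans (le_max_left _ _) hT)
    have hTr : r + 1 ≤ T := le_trans (le_max_right _ _) (le_trans (le_max_left _ _) hT)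
    have hTρ : 2*ρ + 2 ≤ T := le_trans (le_max_right _ _) hT
    have hT0 : (0:ℝ) < T := by linarith
    have hRT : T ≤ R T := by
      rw [hRdef]
      have := Real.sqrt_le_sqrt (show T^2 ≤ a^2 + T^2 by nlinarith)
      rwa [Real.sqrt_sq hT0.le] at this
    have haR : a ≤ R T := by
      rw [hRdef]
      have := Real.sqrt_le_sqrt (show a^2 ≤ a^2 + T^2 by nlinarith)
      rwa [Real.sqrt_sq ha0.le] at this
    have hRpos : 0 < R T := lt_of_lt_of_le ha0 haR
    have hrR : r ≤ R T := by linarith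
    have hRρ : 2*ρ + 2 ≤ R T := by linarith
    have hRsq : R T ^ 2 = a^2 + T^2 := Real.sq_sqrt (by positivity)
    have hdiv0 : 0 ≤ a / R T := div_nonneg ha0.le hRpos.le
    have hdiv1 : a / R T ≤ 1 := (div_le_one hRpos).2 haR
    have hcosθ : Real.cos (θ T) = a / R T := Real.cos_arccos (by linarith) hdiv1
    have hθ0 : 0 ≤ θ T := Real.arccos_nonneg _
    have hθπ2 : θ T ≤ π/2 := Real.arccos_le_pi_div_two.2 hdiv0
    have hRcos : R T * Real.cos (θ T) = a := by rw [hcosθ]; field_simp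
    have hRsin : R T * Real.sin (θ T) = T := by
      rw [hθdef]
      simp only [Real.sin_arccos]
      rw [show (1 - (a / R T)^2) = T^2/(R T)^2 by field_simp; linarith [hRsq]]
      rw [Real.sqrt_div (sq_nonneg T), Real.sqrt_sq hT0.le, Real.sqrt_sq hRpos.le]
      field_simp
    -- endpoints of the arc
    have hmap : ∀ u : ℝ, circleMap 0 (R T) u =
        ((R T * Real.cos u : ℝ) : ℂ) + ((R T * Real.sin u : ℝ) : ℂ) * Complex.I := by
      intro u
      rw [circleMap, Complex.exp_mul_I, ← Complex.ofReal_cos, ← Complex.ofReal_sin]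
      push_cast
      ring
    have hend1 : circleMap 0 (R T) (θ T) = (a : ℂ) + (T : ℂ) * Complex.I := by
      rw [hmap, hRcos, hRsin]
    have hend2 : circleMap 0 (R T) (-(θ T)) = (a : ℂ) + ((-T : ℝ) : ℂ) * Complex.I := by
      rw [hmap, Real.cos_neg, Real.sin_neg, hRcos, mul_neg, hRsin]
    -- segment FTC
    have hseg : (∫ t in (-T)..T, g ((a : ℂ) + (t : ℂ) * Complex.I) * Complex.I) =
        G ((a : ℂ) + (T : ℂ) * Complex.I) - G ((a : ℂ) + ((-T : ℝ) : ℂ) * Complex.I) := by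
      apply intervalIntegral.integral_eq_sub_of_hasDerivAt
      · intro t ht
        have hz : σ < ((a:ℂ) + (t:ℂ) * Complex.I).re := by simp; linarith
        have inner : HasDerivAt (fun w : ℂ => (a:ℂ) + w * Complex.I) Complex.I ((t:ℂ)) := by
          simpa using ((hasDerivAt_id ((t:ℂ))).mul_const Complex.I).const_add ((a:ℂ))
        have hcomp := (hG _ hz).comp ((t:ℂ)) inner
        have := hcomp.comp_ofReal
        simpa using this
      · apply ContinuousOn.intervalIntegrable
        intro t _
        apply ContinuousAt.continuousWithinAt
        have hz : σ < ((a:ℂ) + (t:ℂ) * Complex.I).re := by simp; linarith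
        obtain ⟨h0, h1⟩ := hne _ hz
        apply ContinuousAt.mul _ continuousAt_const
        exact ContinuousAt.comp (x := t) (g := g) (hgc _ h0 h1) (by fun_prop)
    -- arc FTC
    have harc : (∫ u in (-(θ T))..(θ T),
          g (circleMap 0 (R T) u) * (circleMap 0 (R T) u * Complex.I)) =
        G (circleMap 0 (R T) (θ T)) - G (circleMap 0 (R T) (-(θ T))) := by
      have hreσ : ∀ u : ℝ, u ∈ Set.uIcc (-(θ T)) (θ T) → σ < (circleMap 0 (R T) u).re := by
        intro u hu
        rw [Set.uIcc_of_le (by linarith)] at hu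
        have hucos : Real.cos (θ T) ≤ Real.cos u := by
          rw [← Real.cos_abs u]
          apply Real.cos_le_cos_of_nonneg_of_le_pi (abs_nonneg u) (by linarith)
          rw [abs_le]; exact ⟨hu.1, hu.2⟩
        have : (circleMap 0 (R T) u).re = R T * Real.cos u := by
          rw [hmap]; simp [-Complex.ofReal_cos, -Complex.ofReal_sin]
        rw [this]
        have := mul_le_mul_of_nonneg_left hucos hRpos.le
        linarith
      refine intervalIntegral.integral_eq_sub_of_hasDerivAt
        (f := fun u : ℝ => G (circleMap 0 (R T) u)) ?_ ?_
      · intro u hu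
        have hz := hreσ u hu
        have inner : HasDerivAt (fun w : ℂ => ((R T : ℝ) : ℂ) * Complex.exp (w * Complex.I))
            (((R T : ℝ) : ℂ) * Complex.exp ((u:ℂ) * Complex.I) * Complex.I) ((u:ℂ)) := by
          have h0 := (((hasDerivAt_id ((u:ℂ))).mul_const Complex.I).cexp).const_mul
            (((R T : ℝ) : ℂ))
          exact h0.congr_deriv (by simp [mul_assoc])
        have hcm : ∀ v : ℝ, ((R T : ℝ) : ℂ) * Complex.exp ((v:ℂ) * Complex.I) =
            circleMap 0 (R T) v := by intro v; simp [circleMap]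
        have hz' : σ < (((R T : ℝ) : ℂ) * Complex.exp ((u:ℂ) * Complex.I)).re := by
          rw [hcm u]; exact hz
        have hcomp := (hG _ hz').comp ((u:ℂ)) inner
        have hfin := hcomp.comp_ofReal
        simp only [Function.comp_def] at hfin
        simp only [hcm] at hfin
        exact hfin
      · apply ContinuousOn.intervalIntegrable
        intro u hu
        apply ContinuousAt.continuousWithinAt
        obtain ⟨h0, h1⟩ := hne _ (hreσ u hu)
        apply ContinuousAt.mul _ (by fun_prop)
        exact ContinuousAt.comp (x := u) (g := g) (hgc _ h0 h1) (by fun_prop)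
    -- circle integral over (-π, π) and splitting
    have hPcont : Continuous (fun u => deriv (circleMap 0 (R T)) u •
        g (circleMap 0 (R T) u)) := by
      simp only [deriv_circleMap]
      refine Continuous.smul (f := fun u => circleMap 0 (R T) u * Complex.I) (by fun_prop) ?_
      rw [continuous_iff_continuousAt]
      intro u
      have habs : ‖circleMap 0 (R T) u‖ = R T := by
        rw [norm_circleMap_zero, abs_of_pos hRpos]
      have h0 : circleMap 0 (R T) u ≠ 0 := by
        intro h; rw [h] at habs; simp at habs; linarith
      have h1 : circleMap 0 (R T) u ≠ (ρ : ℂ) := by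
        intro h; rw [h] at habs; simp at habs
        rw [abs_of_pos hρ0] at habs; linarith
      exact (hgc _ h0 h1).comp (by fun_prop)
    have hper : Function.Periodic (fun u => deriv (circleMap 0 (R T)) u •
        g (circleMap 0 (R T) u)) (2*π) := by
      intro u
      simp [deriv_circleMap, periodic_circleMap 0 (R T) u]
    have hcircle : (∮ z in C(0, R T), g z) = ∫ u in (-π)..π,
        deriv (circleMap 0 (R T)) u • g (circleMap 0 (R T) u) := by
      rw [circleIntegral]
      have := hper.intervalIntegral_add_eq (-π) 0
      simp only [zero_add] at this
      rw [← this]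
      congr 1
      ring
    have hsplit : (∫ u in (-π)..π, deriv (circleMap 0 (R T)) u • g (circleMap 0 (R T) u)) =
        E₂ T + (∫ u in (-(θ T))..(θ T), deriv (circleMap 0 (R T)) u •
          g (circleMap 0 (R T) u)) + E₁ T := by
      rw [hE₁def, hE₂def]
      have i1 := intervalIntegral.integral_add_adjacent_intervals
        (a := -π) (b := -(θ T)) (c := θ T)
        (hPcont.intervalIntegrable (μ := volume) _ _) (hPcont.intervalIntegrable (μ := volume) _ _)
      have i2 := intervalIntegral.integral_add_adjacent_intervals
        (a := -π) (b := θ T) (c := π)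
        (hPcont.intervalIntegrable (μ := volume) _ _) (hPcont.intervalIntegrable (μ := volume) _ _)
      rw [← i2, ← i1]
    have hminor : (∫ u in (-(θ T))..(θ T), deriv (circleMap 0 (R T)) u •
          g (circleMap 0 (R T) u)) =
        ∫ u in (-(θ T))..(θ T), g (circleMap 0 (R T) u) * (circleMap 0 (R T) u * Complex.I) := by
      apply intervalIntegral.integral_congr
      intro u _
      simp [deriv_circleMap, smul_eq_mul]
      ring
    -- annulus
    have hannulus : (∮ z in C(0, R T), g z) = ∮ z in C(0, r), g z := by
      apply Complex.circleIntegral_eq_of_differentiable_on_annulus_off_countable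
        (show (0:ℝ) < r by linarith) hrR (s := ∅) Set.countable_empty
      · intro w hw
        obtain ⟨hw1, hw2⟩ := hw
        rw [Metric.mem_ball, Complex.dist_eq, sub_zero] at hw2
        push_neg at hw2
        have h0 : w ≠ 0 := by
          intro h; rw [h] at hw2; simp at hw2; linarith
        have h1 : w ≠ (ρ : ℂ) := by
          intro h; rw [h] at hw2; simp [abs_of_pos hρ0] at hw2; linarith
        exact (hgc _ h0 h1).continuousWithinAt
      · intro w hw
        obtain ⟨⟨hw1, hw2⟩, _⟩ := hw
        rw [Metric.mem_closedBall, Complex.dist_eq, sub_zero] at hw2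
        push_neg at hw2
        have h0 : w ≠ 0 := by
          intro h; rw [h] at hw2; simp at hw2; linarith
        have h1 : w ≠ (ρ : ℂ) := by
          intro h; rw [h] at hw2; simp [abs_of_pos hρ0] at hw2; linarith
        exact hdiff _ h0 h1
    -- combine
    have hXI : (∫ t in (-T)..T, g ((a : ℂ) + (t : ℂ) * Complex.I)) * Complex.I =
        (∮ p in C(0, r), g p) - (E₁ T + E₂ T) := by
      rw [← intervalIntegral.integral_mul_const]
      rw [hseg, ← hend1, ← hend2, ← harc, ← hminor]
      rw [← hannulus, hcircle, hsplit]
      ring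
    have hπC : ((Real.pi : ℂ)) ≠ 0 := by
      simpa using Real.pi_ne_zero
    have hIne : Complex.I ≠ 0 := Complex.I_ne_zero
    have hX : (∫ t in (-T)..T, g ((a : ℂ) + (t : ℂ) * Complex.I)) =
        -Complex.I * ((∮ p in C(0, r), g p) - (E₁ T + E₂ T)) := by
      linear_combination (-Complex.I) * hXI +
        (∫ t in (-T)..T, g ((a : ℂ) + (t : ℂ) * Complex.I)) * Complex.I_sq
    rw [hX, show ((2 * (Real.pi:ℂ) * Complex.I))⁻¹ = (2 * (Real.pi:ℂ))⁻¹ * Complex.I⁻¹ by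
      rw [mul_inv], Complex.inv_I]
    ring
  have hE : Tendsto (fun T => E₁ T + E₂ T) atTop (nhds 0) := by
    rw [tendsto_zero_iff_norm_tendsto_zero]
    have hRT' : ∀ T : ℝ, T ≤ R T := by
      intro T
      rw [hRdef]
      calc T ≤ |T| := le_abs_self T
        _ = Real.sqrt (T^2) := (Real.sqrt_sq_eq_abs T).symm
        _ ≤ Real.sqrt (a^2 + T^2) := Real.sqrt_le_sqrt (by nlinarith)
    have hRtop : Tendsto R atTop atTop := tendsto_atTop_mono hRT' tendsto_id
    set D : ℝ := 2 * Real.exp b with hDdef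
    have hD0 : 0 ≤ D := by positivity
    set B : ℝ → ℝ := fun T =>
      2 * (D * Real.exp (c*a) * Real.arcsin (a / R T) + D * (π/(2*(c * R T)))) with hBdef
    have hadiv : Tendsto (fun T => a / R T) atTop (nhds 0) :=
      Tendsto.div_atTop tendsto_const_nhds hRtop
    have harcsin : Tendsto (fun T => Real.arcsin (a / R T)) atTop (nhds 0) := by
      have := (Real.continuous_arcsin.tendsto 0).comp hadiv
      simpa [Function.comp_def] using this
    have hfrac : Tendsto (fun T => π/(2*(c * R T))) atTop (nhds 0) := by
      apply Tendsto.div_atTop tendsto_const_nhds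
      apply Tendsto.const_mul_atTop (by positivity : (0:ℝ) < 2)
      exact Tendsto.const_mul_atTop hc hRtop
    have hB0 : Tendsto B atTop (nhds 0) := by
      rw [hBdef]
      have := ((harcsin.const_mul (D * Real.exp (c*a))).add (hfrac.const_mul D)).const_mul 2
      simpa [mul_comm] using this
    apply squeeze_zero' (Filter.Eventually.of_forall (fun T => norm_nonneg _)) _ hB0
    filter_upwards [eventually_ge_atTop (max (max 1 (r+1)) (2*ρ+2))] with T hT
    have hT1 : (1:ℝ) ≤ T := le_trans (le_max_left _ _) (le_trans (le_max_left _ _) hT)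
    have hTρ : 2*ρ + 2 ≤ T := le_trans (le_max_right _ _) hT
    have hT0 : (0:ℝ) < T := by linarith
    have hRT : T ≤ R T := hRT' T
    have haR : a ≤ R T := by
      rw [hRdef]
      have := Real.sqrt_le_sqrt (show a^2 ≤ a^2 + T^2 by nlinarith)
      rwa [Real.sqrt_sq ha0.le] at this
    have hRpos : 0 < R T := lt_of_lt_of_le ha0 haR
    have hR1 : 1 ≤ R T := by linarith
    have hRρ : 2*ρ + 2 ≤ R T := by linarith
    have hRρ1 : 1 ≤ R T - ρ := by linarith
    have hdiv0 : 0 ≤ a / R T := div_nonneg ha0.le hRpos.le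
    have hdiv1 : a / R T ≤ 1 := (div_le_one hRpos).2 haR
    have hcosθ : Real.cos (θ T) = a / R T := Real.cos_arccos (by linarith) hdiv1
    have hθ0 : 0 ≤ θ T := Real.arccos_nonneg _
    have hθπ2 : θ T ≤ π/2 := Real.arccos_le_pi_div_two.2 hdiv0
    have hcRpos : 0 < c * R T := by positivity
    have hmap : ∀ u : ℝ, circleMap 0 (R T) u =
        ((R T * Real.cos u : ℝ) : ℂ) + ((R T * Real.sin u : ℝ) : ℂ) * Complex.I := by
      intro u
      rw [circleMap, Complex.exp_mul_I, ← Complex.ofReal_cos, ← Complex.ofReal_sin]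
      push_cast
      ring
    -- pointwise bound on the circle
    have hPb : ∀ u : ℝ, ‖deriv (circleMap 0 (R T)) u • g (circleMap 0 (R T) u)‖ ≤
        D * Real.exp ((c * R T) * Real.cos u) := by
      intro u
      have habsz : ‖circleMap 0 (R T) u‖ = R T := by
        rw [norm_circleMap_zero, abs_of_pos hRpos]
      have hzre : (circleMap 0 (R T) u).re = R T * Real.cos u := by
        rw [hmap]; simp [-Complex.ofReal_cos, -Complex.ofReal_sin]
      set z := circleMap 0 (R T) u with hzdef
      have hz0 : z ≠ 0 := by
        intro h; rw [h] at habsz; simp at habsz; linarith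
      have hn1 : ‖(z - (ρ:ℂ)) ^ (-(i:ℤ))‖ ≤ (R T - ρ)⁻¹ := by
        have hzρ : R T - ρ ≤ ‖z - (ρ:ℂ)‖ := by
          have := norm_sub_norm_le z ((ρ:ℂ))
          rw [habsz] at this
          simpa [abs_of_pos hρ0] using this
        rw [norm_zpow]
        rw [zpow_neg, zpow_natCast]
        have h1 : (R T - ρ) ^ i ≤ ‖z - (ρ:ℂ)‖ ^ i :=
          pow_le_pow_left₀ (by linarith) hzρ i
        have h2 : R T - ρ ≤ (R T - ρ) ^ i := le_self_pow₀ (by linarith) (by omega)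
        have h3 : (0:ℝ) < R T - ρ := by linarith
        calc (‖z - (ρ:ℂ)‖ ^ i)⁻¹ ≤ ((R T - ρ) ^ i)⁻¹ := by
              apply inv_anti₀ (by positivity) h1
          _ ≤ (R T - ρ)⁻¹ := inv_anti₀ h3 h2
      have hn2 : ‖z ^ (-(k:ℤ))‖ ≤ 1 := by
        rw [norm_zpow, zpow_neg, zpow_natCast, habsz]
        apply inv_le_one_of_one_le₀
        calc (1:ℝ) = 1^k := (one_pow k).symm
          _ ≤ R T ^ k := pow_le_pow_left₀ zero_le_one hR1 k
      have hn3 : ‖Complex.exp ((b:ℂ)/z)‖ ≤ Real.exp b := by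
        rw [Complex.norm_exp]
        apply Real.exp_le_exp.2
        calc ((b:ℂ)/z).re ≤ ‖(b:ℂ)/z‖ := Complex.re_le_norm _
          _ = b / R T := by
              rw [norm_div, Complex.norm_real, Real.norm_eq_abs, abs_of_nonneg hb, habsz]
          _ ≤ b := div_le_self hb hR1
      have hn4 : ‖Complex.exp ((c:ℂ) * z)‖ = Real.exp ((c * R T) * Real.cos u) := by
        rw [Complex.norm_exp]
        congr 1
        rw [show ((c:ℂ) * z).re = c * z.re by simp, hzre]
        ring
      have hgz : ‖g z‖ ≤ (R T - ρ)⁻¹ * 1 * Real.exp b * Real.exp ((c * R T) * Real.cos u) := by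
        have e : ‖g z‖ = ‖(z - (ρ:ℂ)) ^ (-(i:ℤ))‖ * ‖z ^ (-(k:ℤ))‖ *
            ‖Complex.exp ((b:ℂ)/z)‖ * ‖Complex.exp ((c:ℂ) * z)‖ := by
          rw [hgdef]
          simp only [F2]
          rw [norm_mul, norm_mul, norm_mul]
        rw [e, hn4]
        gcongr
      have hderiv : ‖deriv (circleMap 0 (R T)) u • g z‖ = R T * ‖g z‖ := by
        rw [deriv_circleMap, norm_smul, norm_mul, Complex.norm_I, mul_one, habsz]
      rw [hderiv]
      calc R T * ‖g z‖ ≤ R T * ((R T - ρ)⁻¹ * 1 * Real.exp b *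
            Real.exp ((c * R T) * Real.cos u)) := by
            apply mul_le_mul_of_nonneg_left hgz hRpos.le
        _ = (R T * (R T - ρ)⁻¹) * (Real.exp b * Real.exp ((c * R T) * Real.cos u)) := by ring
        _ ≤ 2 * (Real.exp b * Real.exp ((c * R T) * Real.cos u)) := by
            apply mul_le_mul_of_nonneg_right _ (by positivity)
            rw [mul_inv_le_iff₀ (by linarith : (0:ℝ) < R T - ρ)]
            linarith
        _ = D * Real.exp ((c * R T) * Real.cos u) := by rw [hDdef]; ring
    have hPcont : Continuous (fun u => deriv (circleMap 0 (R T)) u •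
        g (circleMap 0 (R T) u)) := by
      simp only [deriv_circleMap]
      refine Continuous.smul (f := fun u => circleMap 0 (R T) u * Complex.I) (by fun_prop) ?_
      rw [continuous_iff_continuousAt]
      intro u
      have habs : ‖circleMap 0 (R T) u‖ = R T := by
        rw [norm_circleMap_zero, abs_of_pos hRpos]
      have h0 : circleMap 0 (R T) u ≠ 0 := by
        intro h; rw [h] at habs; simp at habs; linarith
      have h1 : circleMap 0 (R T) u ≠ (ρ : ℂ) := by
        intro h; rw [h] at habs; simp at habs
        rw [abs_of_pos hρ0] at habs; linarith
      exact (hgc _ h0 h1).comp (by fun_prop)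
    have heca : (c * R T) * (a / R T) = c * a := by field_simp
    have hgap : π/2 - θ T = Real.arcsin (a / R T) := by
      rw [hθdef]
      simp only [Real.arccos_eq_pi_div_two_sub_arcsin]
      ring
    have hb1 : ‖E₁ T‖ ≤ D * Real.exp (c*a) * Real.arcsin (a / R T) + D * (π/(2*(c * R T))) := by
      rw [hE₁def]
      have := tail_bound hD0 hcRpos hPcont hPb hθ0 hθπ2 hcosθ
      rw [heca, hgap] at this
      exact this
    have hb2 : ‖E₂ T‖ ≤ D * Real.exp (c*a) * Real.arcsin (a / R T) + D * (π/(2*(c * R T))) := by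
      have hE₂eq : E₂ T = ∫ u in (θ T)..π,
          (fun v => deriv (circleMap 0 (R T)) v • g (circleMap 0 (R T) v)) (-u) := by
        rw [hE₂def]
        exact (intervalIntegral.integral_comp_neg (a := θ T) (b := π)
          (f := fun v => deriv (circleMap 0 (R T)) v • g (circleMap 0 (R T) v))).symm
      rw [hE₂eq]
      have hc2 : Continuous (fun u : ℝ =>
          (fun v => deriv (circleMap 0 (R T)) v • g (circleMap 0 (R T) v)) (-u)) :=
        hPcont.comp continuous_neg
      have hb2' : ∀ u : ℝ, ‖(fun v => deriv (circleMap 0 (R T)) v •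
          g (circleMap 0 (R T) v)) (-u)‖ ≤ D * Real.exp ((c * R T) * Real.cos u) := by
        intro u
        simpa [Real.cos_neg] using hPb (-u)
      have := tail_bound hD0 hcRpos hc2 hb2' hθ0 hθπ2 hcosθ
      rw [heca, hgap] at this
      exact this
    calc ‖E₁ T + E₂ T‖ ≤ ‖E₁ T‖ + ‖E₂ T‖ := norm_add_le _ _
      _ ≤ B T := by rw [hBdef]; dsimp only; linarith
  have hfinal : Tendsto (fun T => (2 * Real.pi * Complex.I)⁻¹ * (∮ p in C(0, r), g p) -
      (2 * Real.pi * Complex.I)⁻¹ * (E₁ T + E₂ T)) atTop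
      (nhds ((2 * Real.pi * Complex.I)⁻¹ * ∮ p in C(0, r), g p)) := by
    have h2 : Tendsto (fun T => (2 * Real.pi * Complex.I)⁻¹ * (E₁ T + E₂ T)) atTop (nhds 0) := by
      simpa using hE.const_mul ((2 * Real.pi * Complex.I)⁻¹)
    simpa using (tendsto_const_nhds.sub h2)
  exact hfinal.congr' (by filter_upwards [hEq] with T hT using hT.symm)
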